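/- Let A be a finite nonempty set in a commutative group with |A| = n, and assume min(|A + A|, |A − A|) ≤ Kn. Then there is a set T ⊆ A + A with |T| ≤ 2K² − 1 such that for every positive integer m we have (m+1)(A − A) ⊆ A − A + m(T − T). -/

import Mathlib

open Pointwise

/-- `iterSumset m B` is the `m`-fold iterated sumset `B + B + ⋯ + B` (with the
convention that the `0`-fold sumset is `{0}`). -/
def iterSumset {G : Type*} [AddCommGroup G] [DecidableEq G] : ℕ → Finset G → Finset G
  | 0, _ => {0}
  | n + 1, B => B + iterSumset n B

namespace GreenRuzsaAux

open Finset

variable {G : Type*} [AddCommGroup G] [DecidableEq G]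

/-- Petridis-style consequence of the Plünnecke–Petridis inequality: if `|A + B| ≤ K|A|`
then there is a nonempty `X ⊆ A` with `|X + B + B| ≤ K² |X|`. -/
lemma petridis (A B : Finset G) (hA : A.Nonempty) (K : ℝ)
    (hAB : ((A + B).card : ℝ) ≤ K * A.card) :
    ∃ X : Finset G, X ⊆ A ∧ X.Nonempty ∧ ((X + B + B).card : ℝ) ≤ K ^ 2 * X.card := by
  classical
  have hfam : A ∈ A.powerset.erase ∅ :=
    mem_erase_of_ne_of_mem hA.ne_empty (mem_powerset_self _)
  obtain ⟨X, hXmem, hXmin⟩ := exists_min_image (A.powerset.erase ∅)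
      (fun U => ((U + B).card : ℝ) / U.card) ⟨A, hfam⟩
  rw [mem_erase, mem_powerset, ← nonempty_iff_ne_empty] at hXmem
  obtain ⟨hXne, hXA⟩ := hXmem
  have hX0 : (0 : ℝ) < X.card := by exact_mod_cast hXne.card_pos
  have hA0 : (0 : ℝ) < A.card := by exact_mod_cast hA.card_pos
  have haux : ∀ A' ⊆ X, (X + B).card * A'.card ≤ (A' + B).card * X.card := by
    intro A' hA'
    rcases A'.eq_empty_or_nonempty with rfl | hA'ne
    · simp
    have hmem : A' ∈ A.powerset.erase ∅ :=
      mem_erase_of_ne_of_mem hA'ne.ne_empty (mem_powerset.2 (hA'.trans hXA))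
    have hle := hXmin _ hmem
    have hA'0 : (0 : ℝ) < A'.card := by exact_mod_cast hA'ne.card_pos
    rw [div_le_div_iff₀ hX0 hA'0] at hle
    exact_mod_cast hle
  have hpet := Finset.pluennecke_petridis_inequality_add (A := X) (B := B) B haux
  have hratio : ((X + B).card : ℝ) ≤ K * X.card := by
    have h1 := hXmin _ hfam
    have h2 : ((A + B).card : ℝ) / A.card ≤ K := by
      rw [div_le_iff₀ hA0]; linarith [hAB]
    have h3 := h1.trans h2
    rwa [div_le_iff₀ hX0] at h3
  have hXB0 : (0 : ℝ) ≤ ((X + B).card : ℝ) := by positivity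
  refine ⟨X, hXA, hXne, ?_⟩
  have hcast : ((X + B + B).card : ℝ) * X.card ≤ ((X + B).card : ℝ) * (X + B).card := by
    rw [add_comm B X] at hpet
    exact_mod_cast hpet
  have hsq : ((X + B).card : ℝ) * (X + B).card ≤ (K * X.card) * (K * X.card) :=
    mul_le_mul hratio hratio hXB0 (le_trans hXB0 hratio)
  have hfin : ((X + B + B).card : ℝ) * X.card ≤ (K ^ 2 * X.card) * X.card := by nlinarith
  exact le_of_mul_le_mul_right hfin hX0

/-- The half-covering construction: given a nonempty `X` with `|(A+A) + X| ≤ K₂ |X|`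
and `X - X ⊆ A - A`, there is `T ⊆ A + A` of size at most `2K₂ - 1` with
`(A-A) + (A-A) ⊆ (A-A) + (T-T)`. -/
lemma core (A X : Finset G) (hA : A.Nonempty) (hX : X.Nonempty) (K2 : ℝ)
    (hU : (((A + A) + X).card : ℝ) ≤ K2 * X.card)
    (hXsub : X - X ⊆ A - A) :
    ∃ T : Finset G, T ⊆ A + A ∧ ((T.card : ℝ) ≤ 2 * K2 - 1) ∧
      (A - A) + (A - A) ⊆ (A - A) + (T - T) := by
  classical
  set 𝒯 := (A + A).powerset.filter
      (fun T => T.Nonempty ∧ (T.card + 1) * X.card ≤ 2 * (T + X).card) with h𝒯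
  obtain ⟨s₀, hs₀⟩ := hA.add hA
  have hs₀mem : {s₀} ∈ 𝒯 := by
    rw [h𝒯, mem_filter, mem_powerset]
    refine ⟨singleton_subset_iff.2 hs₀, singleton_nonempty _, ?_⟩
    rw [card_singleton, card_singleton_add]
  obtain ⟨T, hTmem, hTmax⟩ := exists_max_image 𝒯 Finset.card ⟨_, hs₀mem⟩
  rw [h𝒯, mem_filter, mem_powerset] at hTmem
  obtain ⟨hTsub, hTne, hTcard⟩ := hTmem
  have hX0 : 0 < X.card := hX.card_pos
  -- every `s ∈ A + A` has a strict majority of covered translates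
  have maj : ∀ s ∈ A + A, X.card < 2 * (X.filter (fun x => s + x ∈ T + X)).card := by
    intro s hs
    by_contra hcon
    push_neg at hcon
    set M := X.filter (fun x => s + x ∈ T + X) with hM
    have hsT : s ∉ T := by
      intro hsT
      have hMX : M = X := by
        rw [hM]
        apply filter_true_of_mem
        intro x hx
        exact mem_add.2 ⟨s, hsT, x, hx, rfl⟩
      rw [hMX] at hcon
      omega
    have hsX : ({s} : Finset G) + X = X.image (fun x => s + x) := by
      ext y
      simp only [mem_add, mem_image, mem_singleton]
      constructor
      · rintro ⟨a, rfl, x, hx, rfl⟩; exact ⟨x, hx, rfl⟩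
      · rintro ⟨x, hx, rfl⟩; exact ⟨s, rfl, x, hx, rfl⟩
    have hinj : Function.Injective (fun x : G => s + x) := fun a b h => by
      simpa using h
    have hinter : (({s} : Finset G) + X) ∩ (T + X) = M.image (fun x => s + x) := by
      rw [hsX]
      ext y
      simp only [mem_inter, mem_image, hM, mem_filter]
      constructor
      · rintro ⟨⟨x, hx, rfl⟩, hyT⟩; exact ⟨x, ⟨hx, hyT⟩, rfl⟩
      · rintro ⟨x, ⟨hx, hxT⟩, rfl⟩; exact ⟨⟨x, hx, rfl⟩, hxT⟩
    have hunion : ((insert s T) + X).card + M.card = X.card + (T + X).card := by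
      have h1 : (insert s T) + X = (({s} : Finset G) + X) ∪ (T + X) := by
        rw [insert_eq, union_add]
      have h2 := card_union_add_card_inter (({s} : Finset G) + X) (T + X)
      rw [hinter, card_image_of_injective _ hinj] at h2
      rw [h1, h2, card_singleton_add]
    have hins : (insert s T).card = T.card + 1 := card_insert_of_notMem hsT
    have hmem' : insert s T ∈ 𝒯 := by
      rw [h𝒯, mem_filter, mem_powerset]
      refine ⟨insert_subset hs hTsub, insert_nonempty _ _, ?_⟩
      rw [hins]
      have he : (T.card + 1 + 1) * X.card = (T.card + 1) * X.card + X.card := by ring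
      rw [he]
      -- linear arithmetic over ℕ
      have h3 : (T.card + 1) * X.card ≤ 2 * (T + X).card := hTcard
      have h4 : 2 * M.card ≤ X.card := hcon
      have h5 : ((insert s T) + X).card + M.card = X.card + (T + X).card := hunion
      omega
    have := hTmax _ hmem'
    rw [hins] at this
    omega
  -- cardinality bound
  have hbound : (T.card : ℝ) ≤ 2 * K2 - 1 := by
    have h1 : ((T.card : ℝ) + 1) * X.card ≤ 2 * ((T + X).card : ℝ) := by
      exact_mod_cast hTcard
    have h2 : ((T + X).card : ℝ) ≤ (((A + A) + X).card : ℝ) := by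
      exact_mod_cast card_le_card (add_subset_add_right hTsub)
    have hX0' : (0 : ℝ) < X.card := by exact_mod_cast hX0
    have h3 : ((T.card : ℝ) + 1) * X.card ≤ (2 * K2) * X.card := by nlinarith
    have h4 : ((T.card : ℝ) + 1) ≤ 2 * K2 := le_of_mul_le_mul_right h3 hX0'
    linarith
  refine ⟨T, hTsub, hbound, ?_⟩
  -- the covering inclusion
  intro z hz
  obtain ⟨d₁, hd₁, d₂, hd₂, rfl⟩ := mem_add.1 hz
  obtain ⟨α, hα, β, hβ, hd1⟩ := mem_sub.1 hd₁
  obtain ⟨γ, hγ, δ, hδ, hd2⟩ := mem_sub.1 hd₂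
  have hs : α + γ ∈ A + A := add_mem_add hα hγ
  have hs' : β + δ ∈ A + A := add_mem_add hβ hδ
  have h1 := maj _ hs
  have h2 := maj _ hs'
  set M1 := X.filter (fun x => (α + γ) + x ∈ T + X) with hM1
  set M2 := X.filter (fun x => (β + δ) + x ∈ T + X) with hM2
  have hint : (M1 ∩ M2).Nonempty := by
    rw [← card_pos]
    have hsub1 : M1 ∪ M2 ⊆ X := union_subset (filter_subset _ _) (filter_subset _ _)
    have hle := card_le_card hsub1
    have hcc := card_union_add_card_inter M1 M2
    omega
  obtain ⟨x₀, hx₀⟩ := hint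
  rw [mem_inter, hM1, hM2, mem_filter, mem_filter] at hx₀
  obtain ⟨⟨hx₀X, hc1⟩, _, hc2⟩ := hx₀
  obtain ⟨t, ht, x₁, hx₁, e1⟩ := mem_add.1 hc1
  obtain ⟨t', ht', x₂, hx₂, e2⟩ := mem_add.1 hc2
  refine mem_add.2 ⟨x₁ - x₂, hXsub (sub_mem_sub hx₁ hx₂), t - t', sub_mem_sub ht ht', ?_⟩
  have e1' : x₁ = (α + γ) + x₀ - t := by
    rw [eq_sub_iff_add_eq, add_comm]; exact e1
  have e2' : x₂ = (β + δ) + x₀ - t' := by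
    rw [eq_sub_iff_add_eq, add_comm]; exact e2
  rw [e1', e2', ← hd1, ← hd2]
  abel

end GreenRuzsaAux

/-- **Lemma 3** (Green–Ruzsa). Let `A` be a finite nonempty set in a commutative group
with `|A| = n` and `min(|A+A|, |A−A|) ≤ Kn`. Then there is `T ⊆ A + A` with
`|T| ≤ 2K² − 1` such that for every positive integer `m`,
`(m+1)(A − A) ⊆ A − A + m(T − T)`. -/
theorem iterated_covering_lemma {G : Type*} [AddCommGroup G] [DecidableEq G]
    (A : Finset G) (hA : A.Nonempty) (n : ℕ) (K : ℝ) (hn : A.card = n)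
    (hK : (min (A + A).card (A - A).card : ℝ) ≤ K * n) :
    ∃ T : Finset G, T ⊆ A + A ∧ (T.card : ℝ) ≤ 2 * K ^ 2 - 1 ∧
      ∀ m : ℕ, 0 < m →
        iterSumset (m + 1) (A - A) ⊆ (A - A) + iterSumset m (T - T) := by
  classical
  subst hn
  open Finset GreenRuzsaAux in
  -- obtain the Petridis set, adapted to whichever of `A+A`, `A-A` is small
  obtain ⟨X, hXne, hXsum, hXsub⟩ :
      ∃ X : Finset G, X.Nonempty ∧ (((A + A) + X).card : ℝ) ≤ K ^ 2 * X.card ∧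
        X - X ⊆ A - A := by
    rcases le_total (A + A).card (A - A).card with h | h
    · have hcast : ((A + A).card : ℝ) ≤ ((A - A).card : ℝ) := by exact_mod_cast h
      rw [min_eq_left hcast] at hK
      obtain ⟨X, hXA, hXne, hX⟩ := petridis A A hA K hK
      refine ⟨X, hXne, ?_, sub_subset_sub hXA hXA⟩
      have hrw : (A + A) + X = X + A + A := by
        rw [add_comm, add_assoc]
      rw [hrw]
      exact hX
    · have hcast : ((A - A).card : ℝ) ≤ ((A + A).card : ℝ) := by exact_mod_cast h
      rw [min_eq_right hcast] at hK
      have hK' : ((A + (-A)).card : ℝ) ≤ K * A.card := by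
        rw [← sub_eq_add_neg]; exact hK
      obtain ⟨X, hXA, hXne, hX⟩ := petridis A (-A) hA K hK'
      refine ⟨-X, hXne.neg, ?_, ?_⟩
      · have hset : (A + A) + (-X) = -(X + -A + -A) := by
          rw [neg_add_rev, neg_add_rev, neg_neg, add_assoc]
        rw [hset, card_neg, card_neg]
        exact hX
      · intro z hz
        obtain ⟨u, hu, v, hv, rfl⟩ := mem_sub.1 hz
        rw [mem_neg] at hu hv
        obtain ⟨x₁, hx₁, rfl⟩ := hu
        obtain ⟨x₂, hx₂, rfl⟩ := hv
        have hzz : -x₁ - -x₂ = x₂ - x₁ := by abel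
        rw [hzz]
        exact sub_subset_sub hXA hXA (sub_mem_sub hx₂ hx₁)
  obtain ⟨T, hTsub, hTbound, key⟩ := core A X hA hXne (K ^ 2) hXsum hXsub
  refine ⟨T, hTsub, hTbound, ?_⟩
  intro m
  induction m with
  | zero => intro h; exact absurd h (lt_irrefl 0)
  | succ k ih =>
    intro _
    rcases Nat.eq_zero_or_pos k with rfl | hk
    · show iterSumset (0 + 1 + 1) (A - A) ⊆ (A - A) + iterSumset (0 + 1) (T - T)
      have hch : iterSumset (0 + 1 + 1) (A - A)
          = (A - A) + ((A - A) + ({0} : Finset G)) := rfl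
      have hch2 : iterSumset (0 + 1) (T - T) = (T - T) + ({0} : Finset G) := rfl
      rw [hch, hch2, Finset.singleton_zero, add_zero, add_zero]
      exact key
    · have hIH := ih hk
      show iterSumset (k + 1 + 1) (A - A) ⊆ (A - A) + iterSumset (k + 1) (T - T)
      have hu1 : iterSumset (k + 1 + 1) (A - A) = (A - A) + iterSumset (k + 1) (A - A) := rfl
      have hu2 : iterSumset (k + 1) (T - T) = (T - T) + iterSumset k (T - T) := rfl
      rw [hu1, hu2]
      calc (A - A) + iterSumset (k + 1) (A - A)
          ⊆ (A - A) + ((A - A) + iterSumset k (T - T)) :=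
            Finset.add_subset_add_left hIH
        _ = ((A - A) + (A - A)) + iterSumset k (T - T) := (add_assoc _ _ _).symm
        _ ⊆ ((A - A) + (T - T)) + iterSumset k (T - T) :=
            Finset.add_subset_add_right key
        _ = (A - A) + ((T - T) + iterSumset k (T - T)) := add_assoc _ _ _
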